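/- Let ℓ_A, ℓ_U, ℓ_B > 0 and C > 0 be reals, set K = √(ℓ_A·ℓ_U)/ℓ_B and n̂ = (√(1 + 2CK) − 1)/C. Then √(ℓ_A·ℓ_U) · exp(−(n̂/2)·C) ≤ √(2K/C) · ℓ_B. -/

import Mathlib

/-- Second half of the proof of Theorem 2: with `K = √(ℓA ℓU) / ℓB` and
`n̂ = (√(1 + 2 C K) - 1) / C`, the exponential term of the Theorem 1 bound
satisfies `√(ℓA ℓU) exp (-(n̂/2) C) ≤ √(2 K / C) ℓB`. -/
theorem rounds_exp_bound
    (ℓA ℓU ℓB : ℝ) (hℓA : 0 < ℓA) (hℓU : 0 < ℓU) (hℓB : 0 < ℓB)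
    (C : ℝ) (hC : 0 < C)
    (K : ℝ) (hK : K = Real.sqrt (ℓA * ℓU) / ℓB)
    (n : ℝ) (hn : n = (Real.sqrt (1 + 2 * C * K) - 1) / C) :
    Real.sqrt (ℓA * ℓU) * Real.exp (-(n / 2) * C) ≤ Real.sqrt (2 * K / C) * ℓB := by
  have hK0 : 0 < K := by
    rw [hK]
    exact div_pos (Real.sqrt_pos.mpr (by positivity)) hℓB
  set s := Real.sqrt (1 + 2 * C * K) with hsdef
  have hs1 : 1 ≤ s := by
    have h := Real.sqrt_le_sqrt (show (1:ℝ) ≤ 1 + 2 * C * K by nlinarith)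
    rwa [Real.sqrt_one] at h
  have hx : -(n / 2) * C = -((s - 1) / 2) := by
    rw [hn]; field_simp
  have hAU : Real.sqrt (ℓA * ℓU) = K * ℓB := by
    rw [hK]; field_simp
  -- key inequality: √(C*K/2) ≤ exp ((s-1)/2)
  have hhalf : Real.sqrt (2 * C * K) = 2 * Real.sqrt (C * K / 2) := by
    rw [show 2 * C * K = 2 ^ 2 * (C * K / 2) by ring,
      Real.sqrt_mul (by positivity), Real.sqrt_sq (by norm_num)]
  have hsq : Real.sqrt (C * K / 2) ≤ (1 + s) / 2 := by
    have h1 : Real.sqrt (2 * C * K) ≤ s := Real.sqrt_le_sqrt (by linarith)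
    nlinarith [Real.sqrt_nonneg (C * K / 2)]
  have hexp : Real.sqrt (C * K / 2) ≤ Real.exp ((s - 1) / 2) := by
    have := Real.add_one_le_exp ((s - 1) / 2)
    linarith
  have hpos : 0 < Real.sqrt (C * K / 2) := Real.sqrt_pos.mpr (by positivity)
  have heq : Real.sqrt (2 * K / C) * Real.sqrt (C * K / 2) = K := by
    rw [← Real.sqrt_mul (by positivity),
      show 2 * K / C * (C * K / 2) = K ^ 2 by field_simp,
      Real.sqrt_sq hK0.le]
  rw [hAU, hx, Real.exp_neg]
  have hKe : K * (Real.sqrt (C * K / 2))⁻¹ = Real.sqrt (2 * K / C) := by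
    rw [← div_eq_mul_inv, eq_comm, eq_div_iff hpos.ne']
    linarith [heq]
  have hKle : K * (Real.exp ((s - 1) / 2))⁻¹ ≤ Real.sqrt (2 * K / C) := by
    have hinv : (Real.exp ((s - 1) / 2))⁻¹ ≤ (Real.sqrt (C * K / 2))⁻¹ :=
      inv_anti₀ hpos hexp
    calc K * (Real.exp ((s - 1) / 2))⁻¹
        ≤ K * (Real.sqrt (C * K / 2))⁻¹ :=
          mul_le_mul_of_nonneg_left hinv hK0.le
      _ = Real.sqrt (2 * K / C) := hKe
  calc K * ℓB * (Real.exp ((s - 1) / 2))⁻¹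
      = K * (Real.exp ((s - 1) / 2))⁻¹ * ℓB := by ring
    _ ≤ Real.sqrt (2 * K / C) * ℓB :=
        mul_le_mul_of_nonneg_right hKle hℓB.le
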